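/- Let γ be a C² regular curve in E(1,1) with ω(γ̇(t)) = 0 and d/dt(ω(γ̇(t))) ≠ 0. Then lim_{L→∞} k^L_γ(t)/√L = |d/dt(ω(γ̇(t)))| / ((1/2)(−e^{−γ₃}γ̇₁ + e^{γ₃}γ̇₂)² + γ̇₃²). -/
import Mathlib


open Filter

/-- Lemma 5.3 (5.7) of the paper.  Let `γ` be a `C²` regular curve in `E(1,1)` with,
at a fixed point `t`, `ω(γ̇(t)) = 0` and `w' = (d/dt)ω(γ̇(t)) ≠ 0`.  Then
`lim_{L→∞} k^L_γ/√L = |w'| / ((1/2)(-e^{-γ₃}γ̇₁+e^{γ₃}γ̇₂)² + γ̇₃²)`. -/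
theorem e11_curvature_limit_horizontal
    (g3 d1 d2 d3 dd1 dd2 dd3 w w' : ℝ)
    (hw : w = -(Real.sqrt 2 / 2) * (Real.exp (-g3) * d1 + Real.exp g3 * d2))
    (hreg : ¬(d1 = 0 ∧ d2 = 0 ∧ d3 = 0))
    (hw0 : w = 0) (hw' : w' ≠ 0)
    (a b : ℝ) (ha : a = d3)
    (hb : b = (Real.sqrt 2 / 2) * (-Real.exp (-g3) * d1 + Real.exp g3 * d2))
    (A B C : ℝ → ℝ)
    (hA : ∀ L : ℝ, A L = dd3 + (Real.sqrt 2 / 2) * (L + 1)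
        * (-Real.exp (-g3) * d1 + Real.exp g3 * d2) * w)
    (hB : ∀ L : ℝ, B L = (Real.sqrt 2 / 2)
        * (dd2 * Real.exp g3 + d2 * d3 * Real.exp g3
            - dd1 * Real.exp (-g3) + d1 * d3 * Real.exp (-g3)) - L * w * d3)
    (hC : ∀ L : ℝ, C L = w' - (Real.sqrt 2 / (2 * L))
        * (-Real.exp (-g3) * d1 + Real.exp g3 * d2) * d3) :
    Tendsto (fun L : ℝ =>
        Real.sqrt ((A L ^ 2 + B L ^ 2 + L * C L ^ 2) / (a ^ 2 + b ^ 2 + L * w ^ 2) ^ 2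
          - (A L * a + B L * b + L * C L * w) ^ 2 / (a ^ 2 + b ^ 2 + L * w ^ 2) ^ 3)
        / Real.sqrt L)
      atTop (nhds (|w'| / ((1 / 2) * (-Real.exp (-g3) * d1 + Real.exp g3 * d2) ^ 2
          + d3 ^ 2))) := by
  subst hw0
  have h2 : (Real.sqrt 2) ^ 2 = 2 := Real.sq_sqrt (by norm_num)
  set s : ℝ := -Real.exp (-g3) * d1 + Real.exp g3 * d2 with hs
  have hsum : Real.exp (-g3) * d1 + Real.exp g3 * d2 = 0 := by
    have h : Real.sqrt 2 / 2 * (Real.exp (-g3) * d1 + Real.exp g3 * d2) = 0 := by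
      linear_combination hw
    rcases mul_eq_zero.mp h with h' | h'
    · exact absurd h' (by positivity)
    · exact h'
  have hD : 0 < a ^ 2 + b ^ 2 := by
    rcases lt_or_eq_of_le (by positivity : (0:ℝ) ≤ a ^ 2 + b ^ 2) with h | h
    · exact h
    exfalso
    have ha2 : a ^ 2 = 0 := by nlinarith [sq_nonneg a, sq_nonneg b]
    have hb2 : b ^ 2 = 0 := by nlinarith [sq_nonneg a, sq_nonneg b]
    have ha0 : a = 0 := pow_eq_zero_iff (n := 2) (by norm_num) |>.mp ha2
    have hb0 : b = 0 := pow_eq_zero_iff (n := 2) (by norm_num) |>.mp hb2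
    have hs0 : s = 0 := by
      rcases mul_eq_zero.mp (hb ▸ hb0 : Real.sqrt 2 / 2 * s = 0) with h' | h'
      · exact absurd h' (by positivity)
      · exact h'
    have hd2 : d2 = 0 := by
      have he : Real.exp g3 * d2 = 0 := by rw [hs] at hs0; linear_combination (hs0 + hsum) / 2
      rcases mul_eq_zero.mp he with h' | h'
      · exact absurd h' (Real.exp_ne_zero g3)
      · exact h'
    have hd1 : d1 = 0 := by
      have he : Real.exp (-g3) * d1 = 0 := by rw [hd2] at hsum; simpa using hsum
      rcases mul_eq_zero.mp he with h' | h'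
      · exact absurd h' (Real.exp_ne_zero (-g3))
      · exact h'
    exact hreg ⟨hd1, hd2, ha ▸ ha0⟩
  have hDne : (a ^ 2 + b ^ 2) ≠ 0 := hD.ne'
  set Bv : ℝ := (Real.sqrt 2 / 2)
      * (dd2 * Real.exp g3 + d2 * d3 * Real.exp g3
          - dd1 * Real.exp (-g3) + d1 * d3 * Real.exp (-g3)) with hBv
  set c : ℝ := Real.sqrt 2 / 2 * s * d3 with hc
  -- the simplified function
  have h1 : Tendsto (fun L : ℝ => L⁻¹) atTop (nhds 0) := tendsto_inv_atTop_zero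
  have tG : Tendsto (fun L : ℝ => (dd3 ^ 2 + Bv ^ 2) / (a^2+b^2) ^ 2 * L⁻¹
      + (w' - c * L⁻¹) ^ 2 / (a^2+b^2) ^ 2
      - (dd3 * a + Bv * b) ^ 2 / (a^2+b^2) ^ 3 * L⁻¹) atTop
      (nhds (w' ^ 2 / (a ^ 2 + b ^ 2) ^ 2)) := by
    have hh := ((h1.const_mul ((dd3 ^ 2 + Bv ^ 2) / (a^2+b^2) ^ 2)).add
        ((((tendsto_const_nhds : Filter.Tendsto (fun _ : ℝ => w') atTop (nhds w')).sub (h1.const_mul c)).pow 2).div_const ((a^2+b^2) ^ 2))).sub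
        (h1.const_mul ((dd3 * a + Bv * b) ^ 2 / (a^2+b^2) ^ 3))
    have hv : w' ^ 2 / (a ^ 2 + b ^ 2) ^ 2
        = (dd3 ^ 2 + Bv ^ 2) / (a^2+b^2) ^ 2 * 0 + (w' - c * 0) ^ 2 / (a^2+b^2) ^ 2
          - (dd3 * a + Bv * b) ^ 2 / (a^2+b^2) ^ 3 * 0 := by ring
    rw [hv]
    exact hh
  have tS := tG.sqrt
  have hval : Real.sqrt (w' ^ 2 / (a ^ 2 + b ^ 2) ^ 2)
      = |w'| / ((1 / 2) * s ^ 2 + d3 ^ 2) := by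
    have hDeq : a ^ 2 + b ^ 2 = (1 / 2) * s ^ 2 + d3 ^ 2 := by
      rw [ha, hb]; linear_combination (s ^ 2 / 4) * h2
    rw [Real.sqrt_div (sq_nonneg w'), Real.sqrt_sq_eq_abs, Real.sqrt_sq_eq_abs,
      abs_of_pos hD, hDeq]
  rw [hval] at tS
  refine tS.congr' ?_
  filter_upwards [eventually_gt_atTop (0 : ℝ)] with L hL
  have hLne : L ≠ 0 := hL.ne'
  rw [div_eq_mul_inv (Real.sqrt _), ← Real.sqrt_inv, ← Real.sqrt_mul' _ (inv_nonneg.2 hL.le)]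
  symm
  congr 1
  rw [hA L, hB L, hC L]
  field_simp
  ring
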